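/- Consider the planar ODE system a₁' = 2a₄(8 − a₁²) − (4 − 3a₁²)(1 − ¼a₁²), a₄' = a₁a₄((3/2)a₁² − 6 − 8a₄), and define the region R₁ = {(a₁, a₄) ∈ ℝ² : a₁ > 2, a₄ > (3/16)(a₁² − 4), and in addition a₄ < (3a₁² − 4)(a₁² − 4)/(8(8 − a₁²)) in case a₁ < √8}. Then every solution with initial value in R₁ is defined for all forward times, remains in the closure of R₁ for all t ≥ 0, and converges to the equilibrium (2, 0) as t → +∞. -/

import Mathlib

open Filter

/-- The trapping region `R₁` for the planar Whitham ODE system. -/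
def regionR₁ : Set (ℝ × ℝ) :=
  {p | 2 < p.1 ∧ (3/16) * (p.1 ^ 2 - 4) < p.2 ∧
    (p.1 < Real.sqrt 8 →
      p.2 < (3 * p.1 ^ 2 - 4) * (p.1 ^ 2 - 4) / (8 * (8 - p.1 ^ 2)))}

open Set

noncomputable section

/-- first component of the vector field -/
def Fv (x y : ℝ) : ℝ := 2 * y * (8 - x ^ 2) - (4 - 3 * x ^ 2) * (1 - 1/4 * x ^ 2)
/-- second component of the vector field -/
def Gv (x y : ℝ) : ℝ := x * y * (3/2 * x ^ 2 - 6 - 8 * y)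

/-- polynomial version of the region -/
def wR : Set (ℝ × ℝ) :=
  {p | 2 < p.1 ∧ (3/16) * (p.1 ^ 2 - 4) < p.2 ∧
    p.2 * (8 * (8 - p.1 ^ 2)) < (3 * p.1 ^ 2 - 4) * (p.1 ^ 2 - 4)}

lemma regionR₁_eq : regionR₁ = wR := by
  ext ⟨x, y⟩
  simp only [regionR₁, wR, Set.mem_setOf_eq]
  constructor
  · rintro ⟨h1, h2, h3⟩
    refine ⟨h1, h2, ?_⟩
    rcases lt_or_ge x (Real.sqrt 8) with hx | hx
    · have hx8 : x ^ 2 < 8 := (Real.lt_sqrt (by linarith)).mp hx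
      have hD : 0 < 8 * (8 - x ^ 2) := by linarith
      exact (lt_div_iff₀ hD).mp (h3 hx)
    · have hx8 : (8:ℝ) ≤ x ^ 2 := by
        have h8 : Real.sqrt 8 ^ 2 = 8 := Real.sq_sqrt (by norm_num)
        nlinarith [Real.sqrt_nonneg 8, pow_le_pow_left₀ (Real.sqrt_nonneg 8) hx 2]
      nlinarith
  · rintro ⟨h1, h2, h3⟩
    refine ⟨h1, h2, fun hx => ?_⟩
    have hx8 : x ^ 2 < 8 := (Real.lt_sqrt (by linarith)).mp hx
    have hD : 0 < 8 * (8 - x ^ 2) := by linarith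
    exact (lt_div_iff₀ hD).mpr h3

lemma isOpen_wR : IsOpen wR := by
  have h1 : IsOpen {p : ℝ × ℝ | 2 < p.1} := isOpen_lt continuous_const continuous_fst
  have h2 : IsOpen {p : ℝ × ℝ | (3/16) * (p.1 ^ 2 - 4) < p.2} :=
    isOpen_lt (by continuity) continuous_snd
  have h3 : IsOpen {p : ℝ × ℝ | p.2 * (8 * (8 - p.1 ^ 2)) < (3 * p.1 ^ 2 - 4) * (p.1 ^ 2 - 4)} :=
    isOpen_lt (by continuity) (by continuity)
  have : wR = ({p : ℝ × ℝ | 2 < p.1} ∩ {p : ℝ × ℝ | (3/16) * (p.1 ^ 2 - 4) < p.2}) ∩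
      {p : ℝ × ℝ | p.2 * (8 * (8 - p.1 ^ 2)) < (3 * p.1 ^ 2 - 4) * (p.1 ^ 2 - 4)} := by
    ext p; simp [wR, Set.mem_setOf_eq, and_assoc]
  rw [this]
  exact (h1.inter h2).inter h3

lemma mem_wR_iff {p : ℝ × ℝ} : p ∈ wR ↔ 2 < p.1 ∧ (3/16) * (p.1 ^ 2 - 4) < p.2 ∧
    p.2 * (8 * (8 - p.1 ^ 2)) < (3 * p.1 ^ 2 - 4) * (p.1 ^ 2 - 4) := Iff.rfl

lemma wR_y_pos {x y : ℝ} (h : (x, y) ∈ wR) : 0 < y := by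
  obtain ⟨h1, h2, _⟩ := h
  simp only at h1 h2
  nlinarith

lemma Fv_neg {x y : ℝ} (h : (x, y) ∈ wR) : Fv x y < 0 := by
  obtain ⟨h1, h2, h3⟩ := h
  simp only at h1 h2 h3
  have : Fv x y = (y * (8 * (8 - x ^ 2)) - (3 * x ^ 2 - 4) * (x ^ 2 - 4)) / 4 := by
    unfold Fv; ring
  rw [this]; linarith

lemma Gv_neg {x y : ℝ} (h : (x, y) ∈ wR) : Gv x y < 0 := by
  have hy : 0 < y := wR_y_pos h
  obtain ⟨h1, h2, h3⟩ := h
  simp only at h1 h2 h3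
  have : Gv x y = 8 * x * y * ((3/16) * (x ^ 2 - 4) - y) := by unfold Gv; ring
  rw [this]
  have : (3/16) * (x ^ 2 - 4) - y < 0 := by linarith
  nlinarith [mul_pos (mul_pos (by linarith : (0:ℝ) < 8 * x) hy) (neg_pos.mpr this)]

/-- If `f` has derivative `d` at `a` and `f a ≤ f t` for `t` slightly to the left,
then `d ≤ 0`. -/
lemma deriv_nonpos_of_left {f : ℝ → ℝ} {d a : ℝ} (h : HasDerivAt f d a)
    (hev : ∀ᶠ t in nhdsWithin a (Iio a), f a ≤ f t) : d ≤ 0 := by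
  have h' := (h.hasDerivWithinAt (s := Iio a))
  rw [hasDerivWithinAt_iff_tendsto_slope, Set.diff_singleton_eq_self notMem_Iio_self] at h'
  refine le_of_tendsto h' ?_
  filter_upwards [hev, self_mem_nhdsWithin] with t h1 (h2 : t < a)
  rw [slope_def_field]
  exact div_nonpos_of_nonneg_of_nonpos (by linarith) (by linarith)

lemma deriv_nonneg_of_left {f : ℝ → ℝ} {d a : ℝ} (h : HasDerivAt f d a)
    (hev : ∀ᶠ t in nhdsWithin a (Iio a), f t ≤ f a) : 0 ≤ d := by
  have := deriv_nonpos_of_left h.neg (by filter_upwards [hev] with t ht; simpa)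
  linarith

set_option maxHeartbeats 1600000 in
/-- Master trapping lemma: a solution starting in `wR` below level `M` stays in `wR`
below level `M` on `[0, T]`. -/
lemma trap {x y : ℝ → ℝ} {M T : ℝ} (hM : 9 ≤ M)
    (hx0 : x 0 < M) (hy0 : y 0 < M) (h0 : (x 0, y 0) ∈ wR) (hT : 0 ≤ T)
    (hcx : ContinuousOn x (Icc 0 T)) (hcy : ContinuousOn y (Icc 0 T))
    (hdx : ∀ t ∈ Icc (0:ℝ) T, |x t| ≤ M → |y t| ≤ M → HasDerivAt x (Fv (x t) (y t)) t)
    (hdy : ∀ t ∈ Icc (0:ℝ) T, |x t| ≤ M → |y t| ≤ M → HasDerivAt y (Gv (x t) (y t)) t) :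
    ∀ t ∈ Icc (0:ℝ) T, (x t, y t) ∈ wR ∧ x t < M ∧ y t < M := by
  set O : Set (ℝ × ℝ) := wR ∩ {p | p.1 < M ∧ p.2 < M} with hOdef
  have hOopen : IsOpen O := isOpen_wR.inter
    ((isOpen_lt continuous_fst continuous_const).inter
      (isOpen_lt continuous_snd continuous_const))
  have key : ∀ t ∈ Icc (0:ℝ) T, (x t, y t) ∈ O := by
    by_contra hcon
    push_neg at hcon
    obtain ⟨t₁, ht₁, ht₁O⟩ := hcon
    set S := {t | t ∈ Icc (0:ℝ) T ∧ (x t, y t) ∉ O} with hSdef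
    have hS : S.Nonempty := ⟨t₁, ht₁, ht₁O⟩
    have hphi : ContinuousOn (fun t => (x t, y t)) (Icc 0 T) := hcx.prodMk hcy
    have hSclosed : IsClosed S := by
      have : S = Icc 0 T ∩ (fun t => (x t, y t)) ⁻¹' Oᶜ := rfl
      rw [this]
      exact hphi.preimage_isClosed_of_isClosed isClosed_Icc hOopen.isClosed_compl
    have hSbdd : BddBelow S := ⟨0, fun t ht => ht.1.1⟩
    set c := sInf S with hc
    have hcS : c ∈ S := hSclosed.csInf_mem hS hSbdd
    have hc0 : 0 ≤ c := le_csInf hS (fun t ht => ht.1.1)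
    have hcT : c ≤ T := hcS.1.2
    have h0O : (x 0, y 0) ∈ O := ⟨h0, hx0, hy0⟩
    have hcpos : 0 < c := by
      rcases hc0.lt_or_eq with h | h
      · exact h
      · exact absurd h0O (h ▸ hcS.2)
    have hbefore : ∀ t ∈ Ico (0:ℝ) c, (x t, y t) ∈ O := by
      intro t ht
      by_contra hmem
      have : t ∈ S := ⟨⟨ht.1, ht.2.le.trans hcT⟩, hmem⟩
      exact absurd (csInf_le hSbdd this) (not_le.mpr ht.2)
    have hmemIcc : ∀ t ∈ Ico (0:ℝ) c, t ∈ Icc (0:ℝ) T := fun t ht => ⟨ht.1, ht.2.le.trans hcT⟩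
    have hIccsub : Icc (0:ℝ) c ⊆ Icc 0 T := Icc_subset_Icc le_rfl hcT
    have habs : ∀ t ∈ Ico (0:ℝ) c, |x t| ≤ M ∧ |y t| ≤ M := by
      intro t ht
      obtain ⟨hw, hxM, hyM⟩ := hbefore t ht
      have h1 : 2 < x t := hw.1
      have hy' : (0:ℝ) < y t := wR_y_pos hw
      simp only [Set.mem_setOf_eq] at hxM hyM
      exact ⟨abs_le.mpr ⟨by linarith, by linarith⟩, abs_le.mpr ⟨by linarith, by linarith⟩⟩
    have hdx' : ∀ t ∈ Ico (0:ℝ) c, HasDerivAt x (Fv (x t) (y t)) t := fun t ht =>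
      hdx t (hmemIcc t ht) (habs t ht).1 (habs t ht).2
    have hdy' : ∀ t ∈ Ico (0:ℝ) c, HasDerivAt y (Gv (x t) (y t)) t := fun t ht =>
      hdy t (hmemIcc t ht) (habs t ht).1 (habs t ht).2
    have hcontx : ContinuousOn x (Icc 0 c) := hcx.mono hIccsub
    have hconty : ContinuousOn y (Icc 0 c) := hcy.mono hIccsub
    have hIooIco : Ioo (0:ℝ) c ⊆ Ico 0 c := Ioo_subset_Ico_self
    have hxanti : AntitoneOn x (Icc 0 c) := by
      apply antitoneOn_of_deriv_nonpos (convex_Icc 0 c) hcontx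
      · rw [interior_Icc]
        exact fun t ht => ((hdx' t (hIooIco ht)).differentiableAt).differentiableWithinAt
      · rw [interior_Icc]
        intro t ht
        rw [(hdx' t (hIooIco ht)).deriv]
        exact (Fv_neg (hbefore t (hIooIco ht)).1).le
    have hyanti : AntitoneOn y (Icc 0 c) := by
      apply antitoneOn_of_deriv_nonpos (convex_Icc 0 c) hconty
      · rw [interior_Icc]
        exact fun t ht => ((hdy' t (hIooIco ht)).differentiableAt).differentiableWithinAt
      · rw [interior_Icc]
        intro t ht
        rw [(hdy' t (hIooIco ht)).deriv]
        exact (Gv_neg (hbefore t (hIooIco ht)).1).le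
    -- left limits at c
    have hIoomem : Ioo (0:ℝ) c ∈ nhdsWithin c (Iio c) :=
      Ioo_mem_nhdsLT_of_mem ⟨hcpos, le_rfl⟩
    have hfle : nhdsWithin c (Iio c) ≤ nhdsWithin c (Icc 0 T) := by
      refine le_trans (nhdsWithin_le_of_mem hIoomem) (nhdsWithin_mono c ?_)
      exact fun t ht => ⟨ht.1.le, ht.2.le.trans hcT⟩
    have hcmem : c ∈ Icc (0:ℝ) T := ⟨hc0, hcT⟩
    have hlimx : Tendsto x (nhdsWithin c (Iio c)) (nhds (x c)) :=
      (hcx c hcmem).mono_left hfle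
    have hlimy : Tendsto y (nhdsWithin c (Iio c)) (nhds (y c)) :=
      (hcy c hcmem).mono_left hfle
    have hlim : ∀ g : ℝ × ℝ → ℝ, Continuous g →
        Tendsto (fun t => g (x t, y t)) (nhdsWithin c (Iio c)) (nhds (g (x c, y c))) :=
      fun g hg => (hg.tendsto _).comp (hlimx.prodMk_nhds hlimy)
    have hX2 : 2 ≤ x c := by
      refine ge_of_tendsto hlimx ?_
      filter_upwards [hIoomem] with t ht
      exact ((hbefore t (hIooIco ht)).1.1 : 2 < x t).le
    have hYlow : (3/16) * ((x c) ^ 2 - 4) ≤ y c := by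
      have h2 := hlim (fun p => p.2 - (3/16) * (p.1 ^ 2 - 4))
        (continuous_snd.sub (continuous_const.mul ((continuous_fst.pow 2).sub continuous_const)))
      have h3 : (0:ℝ) ≤ y c - (3/16) * ((x c) ^ 2 - 4) := by
        refine ge_of_tendsto h2 ?_
        filter_upwards [hIoomem] with t ht
        have := (hbefore t (hIooIco ht)).1.2.1
        simp only [Set.mem_setOf_eq] at this ⊢
        linarith
      linarith
    have hQle : (y c) * (8 * (8 - (x c) ^ 2)) ≤ (3 * (x c) ^ 2 - 4) * ((x c) ^ 2 - 4) := by
      have h2 := hlim (fun p => (3 * p.1 ^ 2 - 4) * (p.1 ^ 2 - 4) - p.2 * (8 * (8 - p.1 ^ 2)))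
        (((continuous_const.mul (continuous_fst.pow 2)).sub continuous_const).mul
            ((continuous_fst.pow 2).sub continuous_const) |>.sub
          (continuous_snd.mul (continuous_const.mul
            (continuous_const.sub (continuous_fst.pow 2)))))
      have h3 : (0:ℝ) ≤ (3 * (x c) ^ 2 - 4) * ((x c) ^ 2 - 4) - y c * (8 * (8 - (x c) ^ 2)) := by
        refine ge_of_tendsto h2 ?_
        filter_upwards [hIoomem] with t ht
        have := (hbefore t (hIooIco ht)).1.2.2
        simp only [Set.mem_setOf_eq] at this ⊢
        linarith
      linarith
    have h0mem : (0:ℝ) ∈ Icc (0:ℝ) c := ⟨le_rfl, hc0⟩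
    have hcmem' : c ∈ Icc (0:ℝ) c := ⟨hc0, le_rfl⟩
    have hXM : x c ≤ x 0 := hxanti h0mem hcmem' hc0
    have hYM : y c ≤ y 0 := hyanti h0mem hcmem' hc0
    have hXltM : x c < M := lt_of_le_of_lt hXM hx0
    have hYltM : y c < M := lt_of_le_of_lt hYM hy0
    -- Gronwall-type positivity of y at c
    have hY0 : 0 < y c := by
      set cf := fun t => x t * (3/2 * (x t) ^ 2 - 6 - 8 * y t) with hcf
      have hcfc : ContinuousOn cf (Icc 0 c) :=
        hcontx.mul (((continuousOn_const.mul (hcontx.pow 2)).sub continuousOn_const).sub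
          (continuousOn_const.mul hconty))
      obtain ⟨C, hC⟩ := isCompact_Icc.exists_bound_of_continuousOn hcfc
      have hC0 : 0 ≤ C := le_trans (norm_nonneg _) (hC 0 h0mem)
      have hexpd : ∀ t : ℝ, HasDerivAt (fun s => Real.exp (C * s)) (Real.exp (C * t) * C) t := by
        intro t
        have h1 : HasDerivAt (fun s => C * s) C t := by
          simpa using (hasDerivAt_id t).const_mul C
        exact h1.exp
      set g := fun t => y t * Real.exp (C * t) with hg
      have hgmono : MonotoneOn g (Icc 0 c) := by
        apply monotoneOn_of_deriv_nonneg (convex_Icc 0 c)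
        · exact hconty.mul ((Real.continuous_exp.comp (continuous_const.mul continuous_id)).continuousOn)
        · rw [interior_Icc]
          exact fun t ht =>
            (((hdy' t (hIooIco ht)).mul (hexpd t)).differentiableAt).differentiableWithinAt
        · rw [interior_Icc]
          intro t ht
          have hd := (hdy' t (hIooIco ht)).mul (hexpd t)
          rw [show deriv g t = _ from hd.deriv]
          have hyt : 0 < y t := wR_y_pos (hbefore t (hIooIco ht)).1
          have hct : |cf t| ≤ C := by
            have := hC t ⟨ht.1.le, ht.2.le⟩
            rwa [Real.norm_eq_abs] at this
          have hGv : Gv (x t) (y t) = y t * cf t := by simp only [hcf]; unfold Gv; ring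
          rw [hGv]
          have hexp := Real.exp_pos (C * t)
          have hsum : 0 ≤ cf t + C := by linarith [(abs_le.mp hct).1]
          have heq : y t * cf t * Real.exp (C * t) + y t * (Real.exp (C * t) * C)
              = y t * Real.exp (C * t) * (cf t + C) := by ring
          rw [heq]
          exact mul_nonneg (mul_nonneg hyt.le hexp.le) hsum
      have hmono := hgmono h0mem hcmem' hc0
      have hg0 : g 0 = y 0 := by simp [hg]
      have hy0pos : 0 < y 0 := wR_y_pos h0
      rw [hg0] at hmono
      have hgc : g c = y c * Real.exp (C * c) := rfl
      rw [hgc] at hmono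
      have hexp := Real.exp_pos (C * c)
      nlinarith [hmono, hexp, hy0pos]
    -- derivatives at c
    have habsc : |x c| ≤ M ∧ |y c| ≤ M :=
      ⟨abs_le.mpr ⟨by linarith, hXltM.le⟩, abs_le.mpr ⟨by linarith, hYltM.le⟩⟩
    have hdxc : HasDerivAt x (Fv (x c) (y c)) c := hdx c hcmem habsc.1 habsc.2
    have hdyc : HasDerivAt y (Gv (x c) (y c)) c := hdy c hcmem habsc.1 habsc.2
    have hnotwR : (x c, y c) ∉ wR := fun hw => hcS.2 ⟨hw, hXltM, hYltM⟩
    -- case analysis on which boundary is hit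
    rcases eq_or_lt_of_le hX2 with hX | hX
    · -- x c = 2
      have hFpos : 0 < Fv (x c) (y c) := by
        rw [← hX]; unfold Fv; nlinarith [hY0]
      have hle := deriv_nonpos_of_left hdxc (by
        filter_upwards [hIoomem] with t ht
        have h1 : 2 < x t := (hbefore t (hIooIco ht)).1.1
        rw [← hX]; exact h1.le)
      linarith
    rcases eq_or_lt_of_le hYlow with hB | hB
    · -- y c on the lower curve
      set B := fun t => y t - (3/16) * ((x t) ^ 2 - 4) with hBdef
      have hx2d : HasDerivAt (fun t => (x t) ^ 2) (2 * x c * Fv (x c) (y c)) c := by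
        have := hdxc.pow 2
        refine this.congr_deriv ?_
        push_cast
        ring
      have hdB : HasDerivAt B (Gv (x c) (y c) - 3/16 * (2 * x c * Fv (x c) (y c))) c :=
        hdyc.sub ((hx2d.sub_const 4).const_mul (3/16))
      have hBc : B c = 0 := by simp only [hBdef]; linarith
      have hge := deriv_nonpos_of_left hdB (by
        filter_upwards [hIoomem] with t ht
        have h2' := (hbefore t (hIooIco ht)).1.2.1
        simp only [Set.mem_setOf_eq] at h2'
        rw [hBc]
        simp only [hBdef]
        linarith)
      have hGv0 : Gv (x c) (y c) = 0 := by rw [← hB]; unfold Gv; ring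
      have hs : 4 < (x c) ^ 2 := by nlinarith
      have hFneg : Fv (x c) (y c) < 0 := by
        rw [← hB]; unfold Fv
        have heq : 2 * (3/16 * ((x c) ^ 2 - 4)) * (8 - (x c) ^ 2)
            - (4 - 3 * (x c) ^ 2) * (1 - 1/4 * (x c) ^ 2)
            = ((x c) ^ 2 - 4) * (32 - 9 * (x c) ^ 2) / 8 := by ring
        rw [heq]
        have := mul_neg_of_pos_of_neg (sub_pos.mpr hs)
          (show 32 - 9 * (x c) ^ 2 < 0 by linarith)
        linarith
      have hpos : 0 < Gv (x c) (y c) - 3/16 * (2 * x c * Fv (x c) (y c)) := by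
        rw [hGv0]
        nlinarith [mul_pos (show (0:ℝ) < x c by linarith) (neg_pos.mpr hFneg)]
      linarith
    · -- y c on the upper curve
      have hN : ¬ (y c * (8 * (8 - (x c) ^ 2)) < (3 * (x c) ^ 2 - 4) * ((x c) ^ 2 - 4)) :=
        fun hlt => hnotwR ⟨hX, hB, hlt⟩
      have hQeq : y c * (8 * (8 - (x c) ^ 2)) = (3 * (x c) ^ 2 - 4) * ((x c) ^ 2 - 4) :=
        le_antisymm hQle (not_lt.mp hN)
      have hF0 : Fv (x c) (y c) = 0 := by unfold Fv; linear_combination hQeq / 4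
      have hD : 0 < 8 * (8 - (x c) ^ 2) := by
        rcases lt_or_ge 0 (8 * (8 - (x c) ^ 2)) with h | h
        · exact h
        · exfalso
          have hNpos : 0 < (3 * (x c) ^ 2 - 4) * ((x c) ^ 2 - 4) := by nlinarith
          have : y c * (8 * (8 - (x c) ^ 2)) ≤ 0 := mul_nonpos_of_nonneg_of_nonpos hY0.le h
          linarith [hQeq ▸ this]
      set Q := fun t => (3 * (x t) ^ 2 - 4) * ((x t) ^ 2 - 4) - y t * (8 * (8 - (x t) ^ 2))
        with hQdef
      have hx2d : HasDerivAt (fun t => (x t) ^ 2) (2 * x c * Fv (x c) (y c)) c := by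
        have := hdxc.pow 2
        refine this.congr_deriv ?_
        push_cast
        ring
      have h1 : HasDerivAt (fun t => 3 * (x t) ^ 2 - 4) (3 * (2 * x c * Fv (x c) (y c))) c :=
        (hx2d.const_mul 3).sub_const 4
      have h2 : HasDerivAt (fun t => (x t) ^ 2 - 4) (2 * x c * Fv (x c) (y c)) c :=
        hx2d.sub_const 4
      have h3 : HasDerivAt (fun t => 8 * (8 - (x t) ^ 2)) (8 * (-(2 * x c * Fv (x c) (y c)))) c :=
        (hx2d.const_sub 8).const_mul 8
      have hdQ : HasDerivAt Q
          (3 * (2 * x c * Fv (x c) (y c)) * ((x c) ^ 2 - 4)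
            + (3 * (x c) ^ 2 - 4) * (2 * x c * Fv (x c) (y c))
            - (Gv (x c) (y c) * (8 * (8 - (x c) ^ 2))
              + y c * (8 * (-(2 * x c * Fv (x c) (y c)))))) c :=
        (h1.mul h2).sub (hdyc.mul h3)
      have hQc : Q c = 0 := by simp only [hQdef]; linarith
      have hge := deriv_nonpos_of_left hdQ (by
        filter_upwards [hIoomem] with t ht
        have h3' := (hbefore t (hIooIco ht)).1.2.2
        simp only [Set.mem_setOf_eq] at h3'
        rw [hQc]
        simp only [hQdef]
        linarith)
      have hGneg : Gv (x c) (y c) < 0 := by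
        have hbr : 3/2 * (x c) ^ 2 - 6 - 8 * y c < 0 := by nlinarith
        unfold Gv
        nlinarith [mul_pos (mul_pos (show (0:ℝ) < x c by linarith) hY0) (neg_pos.mpr hbr)]
      have hE : 3 * (2 * x c * Fv (x c) (y c)) * ((x c) ^ 2 - 4)
            + (3 * (x c) ^ 2 - 4) * (2 * x c * Fv (x c) (y c))
            - (Gv (x c) (y c) * (8 * (8 - (x c) ^ 2))
              + y c * (8 * (-(2 * x c * Fv (x c) (y c)))))
          = -(Gv (x c) (y c)) * (8 * (8 - (x c) ^ 2)) := by
        rw [hF0]; ring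
      rw [hE] at hge
      nlinarith [mul_pos (neg_pos.mpr hGneg) hD]
  intro t ht
  obtain ⟨h1, h2, h3⟩ := key t ht
  exact ⟨h1, h2, h3⟩

lemma deriv_limit_nonpos {f g : ℝ → ℝ} {L c : ℝ}
    (hf : ∀ t : ℝ, 0 ≤ t → HasDerivAt f (g t) t)
    (hL : Tendsto f atTop (nhds L)) (hc : Tendsto g atTop (nhds c)) : c ≤ 0 := by
  by_contra hpos
  push_neg at hpos
  have hev : ∀ᶠ t in atTop, c/2 ≤ g t := hc.eventually (eventually_ge_nhds (by linarith))
  obtain ⟨T, hT⟩ := eventually_atTop.mp hev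
  set T' := max T 0 with hT'def
  have hmono : MonotoneOn (fun t => f t - c/2 * t) (Ici T') := by
    apply monotoneOn_of_deriv_nonneg (convex_Ici T')
    · intro t ht
      have ht0 : (0:ℝ) ≤ t := le_trans (le_max_right T 0) ht
      have hd : HasDerivAt (fun t => f t - c/2 * t) (g t - c/2) t :=
        (hf t ht0).sub (by simpa using (hasDerivAt_id t).const_mul (c/2))
      exact hd.continuousAt.continuousWithinAt
    · rw [interior_Ici]
      intro t ht
      have ht0 : (0:ℝ) ≤ t := le_trans (le_max_right T 0) (le_of_lt ht)
      have hd : HasDerivAt (fun t => f t - c/2 * t) (g t - c/2) t :=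
        (hf t ht0).sub (by simpa using (hasDerivAt_id t).const_mul (c/2))
      exact hd.differentiableAt.differentiableWithinAt
    · rw [interior_Ici]
      intro t ht
      have ht0 : (0:ℝ) ≤ t := le_trans (le_max_right T 0) (le_of_lt ht)
      have hd : HasDerivAt (fun t => f t - c/2 * t) (g t - c/2) t :=
        (hf t ht0).sub (by simpa using (hasDerivAt_id t).const_mul (c/2))
      rw [hd.deriv]
      have := hT t (le_trans (le_max_left T 0) (le_of_lt ht))
      linarith
  have hbound : ∀ᶠ t in atTop, (f T' - c/2 * T') + c/2 * t ≤ f t := by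
    filter_upwards [eventually_ge_atTop T'] with t ht
    have := hmono (self_mem_Ici) (mem_Ici.mpr ht) ht
    simp only at this
    linarith
  have hlow : Tendsto (fun t : ℝ => (f T' - c/2 * T') + c/2 * t) atTop atTop :=
    tendsto_atTop_add_const_left _ _
      (Tendsto.const_mul_atTop (by linarith : (0:ℝ) < c/2) tendsto_id)
  have htop : Tendsto f atTop atTop := tendsto_atTop_mono' atTop hbound hlow
  exact not_tendsto_nhds_of_tendsto_atTop htop L hL

lemma deriv_limit_zero {f g : ℝ → ℝ} {L c : ℝ}
    (hf : ∀ t : ℝ, 0 ≤ t → HasDerivAt f (g t) t)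
    (hL : Tendsto f atTop (nhds L)) (hc : Tendsto g atTop (nhds c)) : c = 0 := by
  have h1 := deriv_limit_nonpos hf hL hc
  have h2 := deriv_limit_nonpos (f := fun t => -f t) (g := fun t => -g t)
    (fun t ht => (hf t ht).neg) hL.neg hc.neg
  simp only [neg_nonpos] at h2
  linarith

lemma equilibrium {X Y : ℝ} (hX : 2 ≤ X) (hY : 0 ≤ Y)
    (hF : Fv X Y = 0) (hG : Gv X Y = 0) : X = 2 ∧ Y = 0 := by
  unfold Fv at hF
  unfold Gv at hG
  have hXpos : (0:ℝ) < X := by linarith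
  have hsq : (4:ℝ) ≤ X ^ 2 := by nlinarith
  have hfac : 0 < 3 * X ^ 2 - 4 := by linarith
  rcases mul_eq_zero.mp hG with h | hbr
  · rcases mul_eq_zero.mp h with h | h
    · exact absurd h hXpos.ne'
    · -- Y = 0
      rw [h] at hF
      have h4 : (3 * X ^ 2 - 4) * (X ^ 2 - 4) = 0 := by linear_combination (-4) * hF
      have h5 : X ^ 2 - 4 = 0 := by
        rcases mul_eq_zero.mp h4 with h' | h'
        · linarith
        · exact h'
      have h6 : (X - 2) * (X + 2) = 0 := by linear_combination h5
      rcases mul_eq_zero.mp h6 with h' | h'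
      · exact ⟨by linarith, h⟩
      · exact absurd h' (by linarith)
  · -- bracket = 0
    have hYv : Y = 3/16 * (X ^ 2 - 4) := by linarith
    rw [hYv] at hF
    have h4 : (X ^ 2 - 4) * (32 - 9 * X ^ 2) = 0 := by linear_combination 8 * hF
    rcases mul_eq_zero.mp h4 with h' | h'
    · have h6 : (X - 2) * (X + 2) = 0 := by linear_combination h'
      rcases mul_eq_zero.mp h6 with h'' | h''
      · refine ⟨by linarith, ?_⟩
        rw [hYv]
        nlinarith
      · exact absurd h'' (by linarith)
    · exfalso; linarith

lemma continuous_Fv : Continuous (fun p : ℝ × ℝ => Fv p.1 p.2) := by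
  unfold Fv
  exact ((continuous_const.mul continuous_snd).mul
      (continuous_const.sub (continuous_fst.pow 2))).sub
    ((continuous_const.sub (continuous_const.mul (continuous_fst.pow 2))).mul
      (continuous_const.sub (continuous_const.mul (continuous_fst.pow 2))))

lemma continuous_Gv : Continuous (fun p : ℝ × ℝ => Gv p.1 p.2) := by
  unfold Gv
  exact (continuous_fst.mul continuous_snd).mul
    (((continuous_const.mul (continuous_fst.pow 2)).sub continuous_const).sub
      (continuous_const.mul continuous_snd))

lemma part2 {x y : ℝ → ℝ} (h0 : (x 0, y 0) ∈ wR)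
    (hdx : ∀ t : ℝ, 0 ≤ t → HasDerivAt x (Fv (x t) (y t)) t)
    (hdy : ∀ t : ℝ, 0 ≤ t → HasDerivAt y (Gv (x t) (y t)) t) :
    (∀ t : ℝ, 0 ≤ t → (x t, y t) ∈ wR) ∧
      Tendsto (fun t => (x t, y t)) atTop (nhds ((2:ℝ), (0:ℝ))) := by
  set M := max (max (x 0) (y 0)) 9 + 1 with hMdef
  have hM9 : 9 ≤ M := by
    have := le_max_right (max (x 0) (y 0)) 9
    linarith
  have hx0M : x 0 < M := by
    have h1 := le_max_left (x 0) (y 0)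
    have h2 := le_max_left (max (x 0) (y 0)) 9
    linarith
  have hy0M : y 0 < M := by
    have h1 := le_max_right (x 0) (y 0)
    have h2 := le_max_left (max (x 0) (y 0)) 9
    linarith
  have hrmem : ∀ t : ℝ, 0 ≤ t → (x t, y t) ∈ wR := by
    intro t ht
    have := trap hM9 hx0M hy0M h0 ht
      (fun s hs => (hdx s hs.1).continuousAt.continuousWithinAt)
      (fun s hs => (hdy s hs.1).continuousAt.continuousWithinAt)
      (fun s hs _ _ => hdx s hs.1) (fun s hs _ _ => hdy s hs.1) t ⟨ht, le_rfl⟩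
    exact this.1
  have hxanti : AntitoneOn x (Ici 0) := by
    apply antitoneOn_of_deriv_nonpos (convex_Ici 0)
    · exact fun s hs => (hdx s hs).continuousAt.continuousWithinAt
    · rw [interior_Ici]
      exact fun s hs => (hdx s (le_of_lt hs)).differentiableAt.differentiableWithinAt
    · rw [interior_Ici]
      intro s hs
      rw [(hdx s (le_of_lt hs)).deriv]
      exact (Fv_neg (hrmem s (le_of_lt hs))).le
  have hyanti : AntitoneOn y (Ici 0) := by
    apply antitoneOn_of_deriv_nonpos (convex_Ici 0)
    · exact fun s hs => (hdy s hs).continuousAt.continuousWithinAt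
    · rw [interior_Ici]
      exact fun s hs => (hdy s (le_of_lt hs)).differentiableAt.differentiableWithinAt
    · rw [interior_Ici]
      intro s hs
      rw [(hdy s (le_of_lt hs)).deriv]
      exact (Gv_neg (hrmem s (le_of_lt hs))).le
  set xb := fun t : ℝ => x (max t 0) with hxbdef
  set yb := fun t : ℝ => y (max t 0) with hybdef
  have hxbanti : Antitone xb := fun s t hst =>
    hxanti (le_max_right s 0) (le_max_right t 0) (max_le_max hst le_rfl)
  have hybanti : Antitone yb := fun s t hst =>
    hyanti (le_max_right s 0) (le_max_right t 0) (max_le_max hst le_rfl)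
  have hxbd : BddBelow (Set.range xb) := by
    refine ⟨2, ?_⟩
    rintro _ ⟨t, rfl⟩
    exact ((hrmem (max t 0) (le_max_right t 0)).1 : (2:ℝ) < _).le
  have hybd : BddBelow (Set.range yb) := by
    refine ⟨0, ?_⟩
    rintro _ ⟨t, rfl⟩
    exact (wR_y_pos (hrmem (max t 0) (le_max_right t 0))).le
  set L1 := ⨅ t, xb t with hL1def
  set L4 := ⨅ t, yb t with hL4def
  have hxbtend : Tendsto xb atTop (nhds L1) := tendsto_atTop_ciInf hxbanti hxbd
  have hybtend : Tendsto yb atTop (nhds L4) := tendsto_atTop_ciInf hybanti hybd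
  have hxtend : Tendsto x atTop (nhds L1) := by
    refine hxbtend.congr' ?_
    filter_upwards [eventually_ge_atTop (0:ℝ)] with t ht
    simp [hxbdef, max_eq_left ht]
  have hytend : Tendsto y atTop (nhds L4) := by
    refine hybtend.congr' ?_
    filter_upwards [eventually_ge_atTop (0:ℝ)] with t ht
    simp [hybdef, max_eq_left ht]
  have hL1 : 2 ≤ L1 := by
    refine ge_of_tendsto hxtend ?_
    filter_upwards [eventually_ge_atTop (0:ℝ)] with t ht
    exact ((hrmem t ht).1 : 2 < x t).le
  have hL4 : 0 ≤ L4 := by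
    refine ge_of_tendsto hytend ?_
    filter_upwards [eventually_ge_atTop (0:ℝ)] with t ht
    exact (wR_y_pos (hrmem t ht)).le
  have hpair : Tendsto (fun t => (x t, y t)) atTop (nhds (L1, L4)) :=
    hxtend.prodMk_nhds hytend
  have hFtend : Tendsto (fun t => Fv (x t) (y t)) atTop (nhds (Fv L1 L4)) :=
    (continuous_Fv.tendsto _).comp hpair
  have hGtend : Tendsto (fun t => Gv (x t) (y t)) atTop (nhds (Gv L1 L4)) :=
    (continuous_Gv.tendsto _).comp hpair
  have hF0 := deriv_limit_zero hdx hxtend hFtend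
  have hG0 := deriv_limit_zero hdy hytend hGtend
  obtain ⟨hX2, hY0⟩ := equilibrium hL1 hL4 hF0 hG0
  rw [hX2, hY0] at hpair
  exact ⟨hrmem, hpair⟩

def Vv : ℝ × ℝ → ℝ × ℝ := fun p => (Fv p.1 p.2, Gv p.1 p.2)

lemma contDiff_Vv : ContDiff ℝ 1 Vv := by
  apply ContDiff.prodMk
  · unfold Fv
    exact ((contDiff_const.mul contDiff_snd).mul
        (contDiff_const.sub (contDiff_fst.pow 2))).sub
      ((contDiff_const.sub (contDiff_const.mul (contDiff_fst.pow 2))).mul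
        (contDiff_const.sub (contDiff_const.mul (contDiff_fst.pow 2))))
  · unfold Gv
    exact (contDiff_fst.mul contDiff_snd).mul
      (((contDiff_const.mul (contDiff_fst.pow 2)).sub contDiff_const).sub
        (contDiff_const.mul contDiff_snd))

/-- scalar clamp to `[-M, M]` -/
def clampR (M z : ℝ) : ℝ := max (min z M) (-M)

lemma clampR_lip (M : ℝ) : LipschitzWith 1 (clampR M) :=
  (LipschitzWith.id.min_const M).max_const (-M)

lemma clampR_mem {M : ℝ} (hM : 0 ≤ M) (z : ℝ) : clampR M z ∈ Icc (-M) M :=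
  ⟨le_max_right _ _, max_le (min_le_right z M) (by linarith)⟩

lemma clampR_eq {M z : ℝ} (h : |z| ≤ M) : clampR M z = z := by
  obtain ⟨h1, h2⟩ := abs_le.mp h
  unfold clampR
  rw [min_eq_left h2, max_eq_left h1]

/-- clamp on the plane -/
def clampP (M : ℝ) (p : ℝ × ℝ) : ℝ × ℝ := (clampR M p.1, clampR M p.2)

lemma clampP_lip (M : ℝ) : LipschitzWith 1 (clampP M) := by
  have h1 : LipschitzWith 1 (fun p : ℝ × ℝ => clampR M p.1) := by
    have := (clampR_lip M).comp (LipschitzWith.prod_fst (α := ℝ) (β := ℝ)); rwa [mul_one] at this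
  have h2 : LipschitzWith 1 (fun p : ℝ × ℝ => clampR M p.2) := by
    have := (clampR_lip M).comp (LipschitzWith.prod_snd (α := ℝ) (β := ℝ)); rwa [mul_one] at this
  have := h1.prodMk h2
  rwa [max_self] at this

lemma clampP_eq {M : ℝ} {p : ℝ × ℝ} (h1 : |p.1| ≤ M) (h2 : |p.2| ≤ M) : clampP M p = p := by
  unfold clampP
  rw [clampR_eq h1, clampR_eq h2]

lemma part1 (p₀ : ℝ × ℝ) (hp₀ : p₀ ∈ wR) :
    ∃ x y : ℝ → ℝ, x 0 = p₀.1 ∧ y 0 = p₀.2 ∧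
      (∀ t : ℝ, 0 ≤ t → HasDerivAt x (Fv (x t) (y t)) t) ∧
      (∀ t : ℝ, 0 ≤ t → HasDerivAt y (Gv (x t) (y t)) t) := by
  set M := max (max (p₀.1) (p₀.2)) 9 + 1 with hMdef
  have hM9 : 9 ≤ M := by
    have := le_max_right (max (p₀.1) (p₀.2)) 9
    linarith
  have hM0 : 0 ≤ M := by linarith
  have hx0M : p₀.1 < M := by
    have h1 := le_max_left (p₀.1) (p₀.2)
    have h2 := le_max_left (max (p₀.1) (p₀.2)) 9
    linarith
  have hy0M : p₀.2 < M := by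
    have h1 := le_max_right (p₀.1) (p₀.2)
    have h2 := le_max_left (max (p₀.1) (p₀.2)) 9
    linarith
  set W := fun p : ℝ × ℝ => Vv (clampP M p) with hWdef
  set box : Set (ℝ × ℝ) := (Icc (-M) M) ×ˢ (Icc (-M) M) with hboxdef
  have hboxcpt : IsCompact box := isCompact_Icc.prod isCompact_Icc
  have hboxconv : Convex ℝ box := (convex_Icc _ _).prod (convex_Icc _ _)
  have hmaps : ∀ p : ℝ × ℝ, clampP M p ∈ box := fun p =>
    ⟨clampR_mem hM0 p.1, clampR_mem hM0 p.2⟩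
  -- Lipschitz constant for W
  have hfd : Continuous (fderiv ℝ Vv) := contDiff_Vv.continuous_fderiv one_ne_zero
  obtain ⟨C, hC⟩ := hboxcpt.exists_bound_of_continuousOn hfd.continuousOn
  have hlipOn : LipschitzOnWith C.toNNReal Vv box := by
    apply Convex.lipschitzOnWith_of_nnnorm_fderiv_le
      (fun p _ => (contDiff_Vv.differentiable one_ne_zero).differentiableAt)
      (fun p hp => ?_) hboxconv
    rw [← norm_toNNReal]
    exact Real.toNNReal_mono (hC p hp)
  have hlipW : LipschitzWith (C.toNNReal * 1) W := by
    rw [← lipschitzOnWith_univ]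
    exact hlipOn.comp ((clampP_lip M).lipschitzOnWith) (fun p _ => hmaps p)
  -- bound for W
  obtain ⟨Cb, hCb⟩ := hboxcpt.exists_bound_of_continuousOn
    ((contDiff_Vv.continuous).continuousOn)
  have hWb : ∀ p : ℝ × ℝ, ‖W p‖ ≤ Cb := fun p => hCb _ (hmaps p)
  have hCb0 : 0 ≤ Cb := le_trans (norm_nonneg _) (hWb 0)
  -- solutions on [-1, n+1]
  have hex : ∀ n : ℕ, ∃ f : ℝ → ℝ × ℝ, f 0 = p₀ ∧ ∀ t ∈ Icc (-1 : ℝ) ((n:ℝ)+1),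
      HasDerivWithinAt f (W (f t)) (Icc (-1 : ℝ) ((n:ℝ)+1)) t := by
    intro n
    have hn1 : (0:ℝ) ≤ (n:ℝ) + 1 := by positivity
    have hpl : IsPicardLindelof (fun _ p => W p) (tmin := -1) (tmax := (n:ℝ)+1)
        ⟨0, ⟨by norm_num, hn1⟩⟩ p₀ (Cb.toNNReal * ((n:NNReal)+1)) 0 Cb.toNNReal (C.toNNReal * 1) :=
      IsPicardLindelof.of_time_independent
        (fun p _ => (hWb p).trans (Real.le_coe_toNNReal Cb)) hlipW.lipschitzOnWith (by
          have hmax : max (((n:ℝ)+1) - 0) (0 - (-1)) = (n:ℝ)+1 := by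
            rw [max_eq_left]
            · ring
            · push_cast; linarith [Nat.cast_nonneg (α := ℝ) n]
          show (Cb.toNNReal : ℝ) * max (((n:ℝ)+1) - 0) (0 - (-1))
            ≤ ((Cb.toNNReal * ((n:NNReal)+1) : NNReal) : ℝ) - ((0:NNReal):ℝ)
          rw [hmax, NNReal.coe_mul, Real.coe_toNNReal _ hCb0, NNReal.coe_add, NNReal.coe_natCast,
            NNReal.coe_one, NNReal.coe_zero]
          linarith)
    exact hpl.exists_eq_forall_mem_Icc_hasDerivWithinAt₀
  choose fs hfs0 hfs using hex
  have hder : ∀ n : ℕ, ∀ t ∈ Ioo (-1 : ℝ) ((n:ℝ)+1), HasDerivAt (fs n) (W (fs n t)) t :=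
    fun n t ht => (hfs n t (Ioo_subset_Icc_self ht)).hasDerivAt (Icc_mem_nhds ht.1 ht.2)
  -- all the local solutions agree
  have agree : ∀ m n : ℕ, EqOn (fs m) (fs n) (Ioo (-1 : ℝ) (min ((m:ℝ)+1) ((n:ℝ)+1))) := by
    intro m n
    have h0mem : (0:ℝ) ∈ Ioo (-1 : ℝ) (min ((m:ℝ)+1) ((n:ℝ)+1)) := by
      constructor
      · norm_num
      · exact lt_min (by positivity) (by positivity)
    exact ODE_solution_unique_of_mem_Ioo (fun _ _ => hlipW.lipschitzOnWith (s := univ)) h0mem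
      (fun t ht => ⟨hder m t ⟨ht.1, lt_of_lt_of_le ht.2 (min_le_left _ _)⟩, trivial⟩)
      (fun t ht => ⟨hder n t ⟨ht.1, lt_of_lt_of_le ht.2 (min_le_right _ _)⟩, trivial⟩)
      ((hfs0 m).trans (hfs0 n).symm)
  -- the glued global (forward) solution
  set A := fun t : ℝ => fs (⌈t⌉₊) t with hAdef
  have hA0 : A 0 = p₀ := by
    simp only [hAdef, Nat.ceil_zero]
    exact hfs0 0
  have hAd : ∀ t : ℝ, 0 ≤ t → HasDerivAt A (W (A t)) t := by
    intro t ht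
    set N := ⌈t⌉₊ + 1 with hNdef
    have htN : t < (N:ℝ) := by
      rw [hNdef]
      push_cast
      have := Nat.le_ceil t
      linarith
    have hU : Ioo (-1 : ℝ) (N:ℝ) ∈ nhds t := isOpen_Ioo.mem_nhds ⟨by linarith, htN⟩
    have hAeq : ∀ s ∈ Ioo (-1 : ℝ) (N:ℝ), A s = fs N s := by
      intro s hs
      have hNc : ((N:ℕ):ℝ) = (⌈t⌉₊:ℝ) + 1 := by rw [hNdef]; push_cast; ring
      refine agree (⌈s⌉₊) N ⟨hs.1, lt_min ?_ ?_⟩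
      · have := Nat.le_ceil s
        push_cast
        linarith
      · have := hs.2
        push_cast
        linarith
    have hdN : HasDerivAt (fs N) (W (fs N t)) t := by
      refine hder N t ⟨by linarith, by linarith⟩
    have hAev : A =ᶠ[nhds t] fs N := eventuallyEq_of_mem hU hAeq
    have := hdN.congr_of_eventuallyEq hAev
    rwa [← hAeq t ⟨by linarith, htN⟩] at this
  -- components
  set xa := fun t : ℝ => (A t).1 with hxadef
  set ya := fun t : ℝ => (A t).2 with hyadef
  have hcomp : ∀ t : ℝ, 0 ≤ t →
      HasDerivAt xa (W (A t)).1 t ∧ HasDerivAt ya (W (A t)).2 t := by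
    intro t ht
    constructor
    · have := (ContinuousLinearMap.fst ℝ ℝ ℝ).hasFDerivAt.comp_hasDerivAt t (hAd t ht)
      exact this
    · have := (ContinuousLinearMap.snd ℝ ℝ ℝ).hasFDerivAt.comp_hasDerivAt t (hAd t ht)
      exact this
  have hWid : ∀ t : ℝ, |xa t| ≤ M → |ya t| ≤ M → W (A t) = (Fv (xa t) (ya t), Gv (xa t) (ya t)) := by
    intro t h1 h2
    have : clampP M (A t) = A t := clampP_eq h1 h2
    simp only [hWdef, this]
    rfl
  have h0w : (xa 0, ya 0) ∈ wR := by
    simp only [hxadef, hyadef, hA0]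
    exact hp₀
  have hx0M' : xa 0 < M := by simp only [hxadef, hA0]; exact hx0M
  have hy0M' : ya 0 < M := by simp only [hyadef, hA0]; exact hy0M
  -- conditional derivative hypotheses for trap
  have hdxc : ∀ T : ℝ, ∀ t ∈ Icc (0:ℝ) T, |xa t| ≤ M → |ya t| ≤ M →
      HasDerivAt xa (Fv (xa t) (ya t)) t := by
    intro T t htT h1 h2
    have := (hcomp t htT.1).1
    rwa [hWid t h1 h2] at this
  have hdyc : ∀ T : ℝ, ∀ t ∈ Icc (0:ℝ) T, |xa t| ≤ M → |ya t| ≤ M →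
      HasDerivAt ya (Gv (xa t) (ya t)) t := by
    intro T t htT h1 h2
    have := (hcomp t htT.1).2
    rwa [hWid t h1 h2] at this
  have hcxa : ∀ T : ℝ, ContinuousOn xa (Icc 0 T) :=
    fun T t ht => ((hcomp t ht.1).1).continuousAt.continuousWithinAt
  have hcya : ∀ T : ℝ, ContinuousOn ya (Icc 0 T) :=
    fun T t ht => ((hcomp t ht.1).2).continuousAt.continuousWithinAt
  have htrap : ∀ t : ℝ, 0 ≤ t → (xa t, ya t) ∈ wR ∧ xa t < M ∧ ya t < M := by
    intro t ht
    exact trap hM9 hx0M' hy0M' h0w ht (hcxa t) (hcya t) (hdxc t) (hdyc t) t ⟨ht, le_rfl⟩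
  refine ⟨xa, ya, by simp [hxadef, hA0], by simp [hyadef, hA0], ?_, ?_⟩
  · intro t ht
    obtain ⟨hw, h1, h2⟩ := htrap t ht
    have hxgt : 2 < xa t := hw.1
    have hygt : 0 < ya t := wR_y_pos hw
    exact hdxc t t ⟨ht, le_rfl⟩ (abs_le.mpr ⟨by linarith, h1.le⟩) (abs_le.mpr ⟨by linarith, h2.le⟩)
  · intro t ht
    obtain ⟨hw, h1, h2⟩ := htrap t ht
    have hxgt : 2 < xa t := hw.1
    have hygt : 0 < ya t := wR_y_pos hw
    exact hdyc t t ⟨ht, le_rfl⟩ (abs_le.mpr ⟨by linarith, h1.le⟩) (abs_le.mpr ⟨by linarith, h2.le⟩)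

/-- Every solution of the planar Whitham system with initial value in `R₁` is
defined for all forward times, remains in the closure of `R₁` for `t ≥ 0`, and
converges to the equilibrium `(2, 0)` as `t → +∞`. -/
theorem stmt_8 (p₀ : ℝ × ℝ) (hp₀ : p₀ ∈ regionR₁) :
    (∃ a₁ a₄ : ℝ → ℝ, a₁ 0 = p₀.1 ∧ a₄ 0 = p₀.2 ∧
      (∀ t : ℝ, 0 ≤ t → HasDerivAt a₁
        (2 * a₄ t * (8 - a₁ t ^ 2) - (4 - 3 * a₁ t ^ 2) * (1 - 1/4 * a₁ t ^ 2)) t) ∧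
      (∀ t : ℝ, 0 ≤ t → HasDerivAt a₄
        (a₁ t * a₄ t * (3/2 * a₁ t ^ 2 - 6 - 8 * a₄ t)) t)) ∧
    (∀ a₁ a₄ : ℝ → ℝ, a₁ 0 = p₀.1 → a₄ 0 = p₀.2 →
      (∀ t : ℝ, 0 ≤ t → HasDerivAt a₁
        (2 * a₄ t * (8 - a₁ t ^ 2) - (4 - 3 * a₁ t ^ 2) * (1 - 1/4 * a₁ t ^ 2)) t) →
      (∀ t : ℝ, 0 ≤ t → HasDerivAt a₄
        (a₁ t * a₄ t * (3/2 * a₁ t ^ 2 - 6 - 8 * a₄ t)) t) →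
      (∀ t : ℝ, 0 ≤ t → (a₁ t, a₄ t) ∈ closure regionR₁) ∧
      Tendsto (fun t => (a₁ t, a₄ t)) atTop (nhds (2, 0))) := by
  have hp₀' : p₀ ∈ wR := by rwa [regionR₁_eq] at hp₀
  constructor
  · obtain ⟨x, y, hx0, hy0, hdx, hdy⟩ := part1 p₀ hp₀'
    exact ⟨x, y, hx0, hy0, hdx, hdy⟩
  · intro a₁ a₄ h1 h2 hd1 hd2
    have h0 : (a₁ 0, a₄ 0) ∈ wR := by
      rw [h1, h2, Prod.mk.eta]
      exact hp₀'
    obtain ⟨hmem, htend⟩ := part2 h0 (fun t ht => hd1 t ht) (fun t ht => hd2 t ht)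
    refine ⟨fun t ht => ?_, htend⟩
    rw [regionR₁_eq]
    exact subset_closure (hmem t ht)
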